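/- arXiv:2102.06753 — 3 statements merged into one kernel-verified Lean document; each statement's English description precedes it below -/
import Mathlib

section
/- If x1 and x2 are Boolean random variables each independent of a secret s, and x1 is independent of x2 conditional on s (e.g., they are computed from disjoint sets of random inputs together with s-independent values), and x2 is uniformly distributed and independent of (x1, s), then x1 ∧ x2 is independent of s. -/
open MeasureTheory ProbabilityTheory

theorem and_with_fresh_uniform_is_sid
    {Ω : Type*} [MeasurableSpace Ω] (μ : Measure Ω) [IsProbabilityMeasure μ]
    (x1 x2 s : Ω → Bool) (hx1 : Measurable x1) (hx2 : Measurable x2) (hs : Measurable s)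
    (hunif : ∀ b : Bool, μ {ω | x2 ω = b} = 1/2)
    (hfresh : IndepFun (fun ω => (x1 ω, s ω)) x2 μ)
    (hsid : IndepFun x1 s μ) :
    IndepFun (fun ω => x1 ω && x2 ω) s μ := by
  -- First show the pair (x1, x2) is independent of s.
  have hpair : IndepFun (fun ω => (x1 ω, x2 ω)) s μ := by
    rw [indepFun_iff_map_prod_eq_prod_map_map (hx1.prodMk hx2).aemeasurable
        hs.aemeasurable]
    · apply Measure.ext_of_singleton
      rintro ⟨⟨a, b⟩, c⟩
      have h1 : μ ((fun ω => (x1 ω, s ω)) ⁻¹' {(a, c)} ∩ x2 ⁻¹' {b})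
          = μ ((fun ω => (x1 ω, s ω)) ⁻¹' {(a, c)}) * μ (x2 ⁻¹' {b}) :=
        hfresh.measure_inter_preimage_eq_mul _ _ (measurableSet_singleton _)
          (measurableSet_singleton _)
      have h2 : μ ((fun ω => (x1 ω, s ω)) ⁻¹' ({a} ×ˢ Set.univ) ∩ x2 ⁻¹' {b})
          = μ ((fun ω => (x1 ω, s ω)) ⁻¹' ({a} ×ˢ Set.univ)) * μ (x2 ⁻¹' {b}) :=
        hfresh.measure_inter_preimage_eq_mul _ _
          ((measurableSet_singleton _).prod MeasurableSet.univ) (measurableSet_singleton _)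
      have h3 : μ (x1 ⁻¹' {a} ∩ s ⁻¹' {c}) = μ (x1 ⁻¹' {a}) * μ (s ⁻¹' {c}) :=
        hsid.measure_inter_preimage_eq_mul _ _ (measurableSet_singleton _)
          (measurableSet_singleton _)
      have e1 : (fun ω => (x1 ω, s ω)) ⁻¹' {(a, c)} = x1 ⁻¹' {a} ∩ s ⁻¹' {c} := by
        ext ω; simp [Prod.ext_iff]
      have e2 : (fun ω => (x1 ω, s ω)) ⁻¹' ({a} ×ˢ (Set.univ : Set Bool)) = x1 ⁻¹' {a} := by
        ext ω; simp
      rw [← Set.singleton_prod_singleton, Measure.prod_prod,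
        Measure.map_apply ((hx1.prodMk hx2).prodMk hs)
          ((measurableSet_singleton _).prod (measurableSet_singleton _)),
        Measure.map_apply (hx1.prodMk hx2) (measurableSet_singleton _),
        Measure.map_apply hs (measurableSet_singleton _)]
      have ep : (fun ω => ((x1 ω, x2 ω), s ω)) ⁻¹' ({(a, b)} ×ˢ {c})
          = (x1 ⁻¹' {a} ∩ s ⁻¹' {c}) ∩ x2 ⁻¹' {b} := by
        ext ω; simp [Prod.ext_iff, eq_comm]; tauto
      have ep2 : (fun ω => (x1 ω, x2 ω)) ⁻¹' {(a, b)} = x1 ⁻¹' {a} ∩ x2 ⁻¹' {b} := by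
        ext ω; simp [Prod.ext_iff, eq_comm]
      rw [ep, ep2, ← e1, h1, e1, h3]
      rw [e2] at h2
      rw [h2]
      ring
  have : (fun ω => x1 ω && x2 ω) = (fun p : Bool × Bool => p.1 && p.2) ∘ (fun ω => (x1 ω, x2 ω)) :=
    rfl
  rw [this]
  exact hpair.comp (measurable_of_countable _) measurable_id
end

section
/- If x1 is independent of s, and x2 is uniform on Bool and independent of the pair (x1, s), then x1 ∨ x2 is independent of s. -/
open MeasureTheory ProbabilityTheory

private lemma bool_set_cases (t : Set Bool) :
    t = ∅ ∨ t = {true} ∨ t = {false} ∨ t = Set.univ := by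
  by_cases ht : true ∈ t <;> by_cases hf : false ∈ t
  · right; right; right; ext x; cases x <;> simp [ht, hf]
  · right; left; ext x; cases x <;> simp [ht, hf]
  · right; right; left; ext x; cases x <;> simp [ht, hf]
  · left; ext x; cases x <;> simp [ht, hf]

private lemma indepFun_bool_of_singletons {Ω : Type*} [MeasurableSpace Ω]
    (μ : Measure Ω) [IsProbabilityMeasure μ] (f g : Ω → Bool)
    (h : ∀ a b : Bool, μ (f ⁻¹' {a} ∩ g ⁻¹' {b}) = μ (f ⁻¹' {a}) * μ (g ⁻¹' {b})) :
    IndepFun f g μ := by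
  rw [indepFun_iff_measure_inter_preimage_eq_mul]
  intro s t _ _
  rcases bool_set_cases s with rfl | rfl | rfl | rfl <;>
    rcases bool_set_cases t with rfl | rfl | rfl | rfl <;>
      (try simp only [Set.preimage_empty, Set.empty_inter, Set.inter_empty, measure_empty,
        zero_mul, mul_zero, Set.preimage_univ, Set.univ_inter, Set.inter_univ,
        measure_univ, one_mul, mul_one]) <;>
      first | rfl | exact h _ _

private lemma compl_mul_step {Ω : Type*} [MeasurableSpace Ω]
    (μ : Measure Ω) [IsProbabilityMeasure μ] (T S : Set Ω) (hT : MeasurableSet T)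
    (h : μ (Tᶜ ∩ S) = μ Tᶜ * μ S) : μ (T ∩ S) = μ T * μ S := by
  have h1 : μ (S ∩ T) + μ (S \ T) = μ S := measure_inter_add_diff S hT
  have h2 : μ T + μ Tᶜ = 1 := by simpa using measure_add_measure_compl (μ := μ) hT
  have hdiff : S \ T = Tᶜ ∩ S := by rw [Set.diff_eq_compl_inter]
  rw [hdiff, h] at h1
  rw [Set.inter_comm]
  have hTc : μ Tᶜ * μ S ≠ ⊤ := by
    exact ENNReal.mul_ne_top (measure_ne_top μ _) (measure_ne_top μ _)
  have hT1 : μ T = 1 - μ Tᶜ := by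
    rw [← h2]; simp [ENNReal.add_sub_cancel_right (measure_ne_top μ _)]
  calc μ (S ∩ T) = μ S - μ Tᶜ * μ S := ENNReal.eq_sub_of_add_eq hTc h1
    _ = (1 - μ Tᶜ) * μ S := by
        rw [ENNReal.sub_mul (fun _ _ => measure_ne_top μ _), one_mul]
    _ = μ S * μ T := by rw [hT1, mul_comm]
  rw [mul_comm]

theorem or_with_fresh_uniform_is_sid
    {Ω : Type*} [MeasurableSpace Ω] (μ : Measure Ω) [IsProbabilityMeasure μ]
    (x1 x2 s : Ω → Bool) (hx1 : Measurable x1) (hx2 : Measurable x2) (hs : Measurable s)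
    (hsid : IndepFun x1 s μ)
    (hunif : ∀ b : Bool, μ {ω | x2 ω = b} = 1/2)
    (hfresh : IndepFun (fun ω => (x1 ω, s ω)) x2 μ) :
    IndepFun (fun ω => x1 ω || x2 ω) s μ := by
  have hx2pre : ∀ b : Bool, μ (x2 ⁻¹' {b}) = 1/2 := by
    intro b; exact hunif b
  -- independence from hsid on singletons
  have h1 : ∀ b c : Bool, μ (x1 ⁻¹' {b} ∩ s ⁻¹' {c}) = μ (x1 ⁻¹' {b}) * μ (s ⁻¹' {c}) :=
    fun b c => hsid.measure_inter_preimage_eq_mul _ _ (MeasurableSet.singleton b)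
      (MeasurableSet.singleton c)
  -- freshness on singleton pairs
  have hf : ∀ b c d : Bool,
      μ (x1 ⁻¹' {b} ∩ s ⁻¹' {c} ∩ x2 ⁻¹' {d})
        = μ (x1 ⁻¹' {b} ∩ s ⁻¹' {c}) * μ (x2 ⁻¹' {d}) := by
    intro b c d
    have := hfresh.measure_inter_preimage_eq_mul ({b} ×ˢ {c}) {d}
      ((MeasurableSet.singleton b).prod (MeasurableSet.singleton c))
      (MeasurableSet.singleton d)
    have hpre : (fun ω => (x1 ω, s ω)) ⁻¹' ({b} ×ˢ {c}) = x1 ⁻¹' {b} ∩ s ⁻¹' {c} := by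
      ext ω; simp [Set.mem_prod]
    rwa [hpre] at this
  -- x1 independent of x2
  have hx1x2 : ∀ b d : Bool, μ (x1 ⁻¹' {b} ∩ x2 ⁻¹' {d}) = μ (x1 ⁻¹' {b}) * μ (x2 ⁻¹' {d}) := by
    intro b d
    have := hfresh.measure_inter_preimage_eq_mul ({b} ×ˢ (Set.univ : Set Bool)) {d}
      ((MeasurableSet.singleton b).prod MeasurableSet.univ) (MeasurableSet.singleton d)
    have hpre : (fun ω => (x1 ω, s ω)) ⁻¹' ({b} ×ˢ (Set.univ : Set Bool)) = x1 ⁻¹' {b} := by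
      ext ω; simp [Set.mem_prod]
    rwa [hpre] at this
  -- key: the false fiber of the OR
  have hORfalse : (fun ω => x1 ω || x2 ω) ⁻¹' {false} = x1 ⁻¹' {false} ∩ x2 ⁻¹' {false} := by
    ext ω; simp
  apply indepFun_bool_of_singletons
  have key_false : ∀ c : Bool,
      μ ((fun ω => x1 ω || x2 ω) ⁻¹' {false} ∩ s ⁻¹' {c})
        = μ ((fun ω => x1 ω || x2 ω) ⁻¹' {false}) * μ (s ⁻¹' {c}) := by
    intro c
    have hset : (fun ω => x1 ω || x2 ω) ⁻¹' {false} ∩ s ⁻¹' {c}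
        = x1 ⁻¹' {false} ∩ s ⁻¹' {c} ∩ x2 ⁻¹' {false} := by
      ext ω
      simp only [Set.mem_inter_iff, Set.mem_preimage, Set.mem_singleton_iff,
        Bool.or_eq_false_iff]
      tauto
    rw [hset, hf false c false, h1 false c, hORfalse, hx1x2 false false]
    ring
  intro a c
  cases a
  · exact key_false c
  · have hcompl : ((fun ω => x1 ω || x2 ω) ⁻¹' {true})ᶜ = (fun ω => x1 ω || x2 ω) ⁻¹' {false} := by
      ext ω; simp
    have hTmeas : MeasurableSet ((fun ω => x1 ω || x2 ω) ⁻¹' {true}) := by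
      have hT : (fun ω => x1 ω || x2 ω) ⁻¹' {true} = (x1 ⁻¹' {false} ∩ x2 ⁻¹' {false})ᶜ := by
        rw [← hORfalse, ← hcompl, compl_compl]
      rw [hT]
      exact ((hx1 (MeasurableSet.singleton false)).inter (hx2 (MeasurableSet.singleton false))).compl
    apply compl_mul_step μ _ _ hTmeas
    rw [hcompl]
    exact key_false c
end

section
/- If x2 is uniform on Bool and independent of the pair (x1, s), then x1 ⊕ x2 is uniform on Bool and independent of s. -/
open MeasureTheory ProbabilityTheory

theorem xor_with_fresh_uniform_is_rud
    {Ω : Type*} [MeasurableSpace Ω] (μ : Measure Ω) [IsProbabilityMeasure μ]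
    (x1 x2 s : Ω → Bool) (hx1 : Measurable x1) (hx2 : Measurable x2) (hs : Measurable s)
    (hunif : ∀ b : Bool, μ {ω | x2 ω = b} = 1/2)
    (hfresh : IndepFun (fun ω => (x1 ω, s ω)) x2 μ) :
    (∀ b : Bool, μ {ω | xor (x1 ω) (x2 ω) = b} = 1/2) ∧
    IndepFun (fun ω => xor (x1 ω) (x2 ω)) s μ := by
  have hpair : Measurable (fun ω => (x1 ω, s ω)) := hx1.prodMk hs
  have hind := (indepFun_iff_measure_inter_preimage_eq_mul).mp hfresh
  have hmul : ∀ (a b : Bool) (B : Set Bool), MeasurableSet B →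
      μ ((fun ω => (x1 ω, s ω)) ⁻¹' ({a} ×ˢ B) ∩ x2 ⁻¹' {b})
        = μ ((fun ω => (x1 ω, s ω)) ⁻¹' ({a} ×ˢ B)) * (1/2) := by
    intro a b B hB
    rw [hind _ _ ((measurableSet_singleton a).prod hB) (measurableSet_singleton b)]
    congr 1
    exact hunif b
  have hsplit : ∀ (B : Set Bool),
      μ ((fun ω => (x1 ω, s ω)) ⁻¹' ({false} ×ˢ B))
        + μ ((fun ω => (x1 ω, s ω)) ⁻¹' ({true} ×ˢ B)) = μ (s ⁻¹' B) := by
    intro B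
    rw [← measure_union ?_ (hpair ((measurableSet_singleton true).prod (by trivial)))]
    · congr 1
      ext ω
      cases h1 : x1 ω <;> simp [h1]
    · intro T hT hT' ω hω
      have h1 := hT hω
      have h2 := hT' hω
      simp at h1 h2
      exact absurd h2 (by simp [h1.1])
  have hkey : ∀ (b : Bool) (B : Set Bool), MeasurableSet B →
      μ ({ω | xor (x1 ω) (x2 ω) = b} ∩ s ⁻¹' B) = μ (s ⁻¹' B) * (1/2) := by
    intro b B hB
    have hdecomp : {ω | xor (x1 ω) (x2 ω) = b} ∩ s ⁻¹' B
        = ((fun ω => (x1 ω, s ω)) ⁻¹' ({false} ×ˢ B) ∩ x2 ⁻¹' {xor false b})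
          ∪ ((fun ω => (x1 ω, s ω)) ⁻¹' ({true} ×ˢ B) ∩ x2 ⁻¹' {xor true b}) := by
      ext ω
      cases h1 : x1 ω <;> cases h2 : x2 ω <;> cases b <;> simp [h1, h2]
    rw [hdecomp, measure_union ?_ ((hpair ((measurableSet_singleton true).prod hB)).inter (hx2 (measurableSet_singleton _))), hmul, hmul, ← add_mul, hsplit]
    · exact hB
    · exact hB
    · intro T hT hT' ω hω
      have h1 := (hT hω).1
      have h2 := (hT' hω).1
      simp at h1 h2
      exact absurd h2 (by simp [h1.1])
  have h1 : ∀ b : Bool, μ {ω | xor (x1 ω) (x2 ω) = b} = 1/2 := by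
    intro b
    have := hkey b Set.univ MeasurableSet.univ
    rw [Set.preimage_univ, Set.inter_univ, measure_univ, one_mul] at this
    exact this
  refine ⟨h1, ?_⟩
  rw [indepFun_iff_measure_inter_preimage_eq_mul]
  intro A B hA hB
  have hAcases : A = ∅ ∨ A = {false} ∨ A = {true} ∨ A = Set.univ := by
    by_cases ht : true ∈ A <;> by_cases hf : false ∈ A
    · right; right; right; ext b; cases b <;> simp [ht, hf]
    · right; right; left; ext b; cases b <;> simp [ht, hf]
    · right; left; ext b; cases b <;> simp [ht, hf]
    · left; ext b; cases b <;> simp [ht, hf]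
  rcases hAcases with rfl | rfl | rfl | rfl
  · simp
  · have := hkey false B hB
    have h2 := h1 false
    have hpre : (fun ω => xor (x1 ω) (x2 ω)) ⁻¹' ({false} : Set Bool) = {ω | xor (x1 ω) (x2 ω) = false} := by
      ext ω; simp
    rw [hpre, this, h2, mul_comm]
  · have := hkey true B hB
    have h2 := h1 true
    have hpre : (fun ω => xor (x1 ω) (x2 ω)) ⁻¹' ({true} : Set Bool) = {ω | xor (x1 ω) (x2 ω) = true} := by
      ext ω; simp
    rw [hpre, this, h2, mul_comm]
  · rw [Set.preimage_univ, Set.univ_inter, measure_univ, one_mul]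
end
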